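/- Let C ∈ {B,W}, r ∈ ℕ, and let v̂, û be nodes of the induced subgraph Ĥ_{C,d} of H_{C,d}. If the nodes g_C(v̂) and g_C(û) of G_d are r-SV-bisimilar (with trivial input and generalised port numbering p_d) and f_C(v̂) = f_C(û), then v̂ and û are r-SV-bisimilar in (Ĥ_{C,d}, f_C, p_C). -/

import Mathlib

namespace Paper

/-- The degree of a vertex: the number of its neighbours. -/
noncomputable def deg {V : Type} (G : SimpleGraph V) (v : V) : ℕ :=
  {u | G.Adj v u}.ncard

/-- A port numbering of a graph, modelled as a partial map sending each
output port `(v, i)` with `1 ≤ i ≤ deg v` to an input port `(u, j)` of an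
adjacent node `u`, bijectively, such that there is a port between `v` and `u`
if and only if they are adjacent. -/
structure IsPortNumbering {V : Type} (G : SimpleGraph V)
    (pn : V → ℕ → Option (V × ℕ)) : Prop where
  dom : ∀ v i, (pn v i).isSome ↔ 1 ≤ i ∧ i ≤ deg G v
  adj : ∀ v i u j, pn v i = some (u, j) → G.Adj v u ∧ 1 ≤ j ∧ j ≤ deg G u
  bij : ∀ u j, 1 ≤ j → j ≤ deg G u → ∃! vi : V × ℕ, pn vi.1 vi.2 = some (u, j)
  edge : ∀ v u, G.Adj v u ↔ ∃ i j, pn v i = some (u, j)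

/-- A generalised port numbering with port numbers from an arbitrary set `N`:
each node `v` has a set of `deg v` output port numbers (those `o` with
`pn v o ≠ none`) and a set of `deg v` input port numbers (those `i` received
from some output port), and `pn` is a bijection from output ports to input
ports of adjacent nodes. -/
structure IsGenPortNumbering {V N : Type} (G : SimpleGraph V)
    (pn : V → N → Option (V × N)) : Prop where
  adj : ∀ v o u i, pn v o = some (u, i) → G.Adj v u
  edge : ∀ v u, G.Adj v u → ∃ o i, pn v o = some (u, i)
  inj : ∀ v o v' o' u i, pn v o = some (u, i) → pn v' o' = some (u, i) →
    v = v' ∧ o = o'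
  out_card : ∀ v, {o | (pn v o).isSome}.ncard = deg G v
  in_card : ∀ u, {i | ∃ v o, pn v o = some (u, i)}.ncard = deg G u

/-- `r`-SV-bisimilarity of `(G, f, v, p)` and `(G', f', v', p')`. -/
def SVBisim {V V' X N : Type} (G : SimpleGraph V) (G' : SimpleGraph V')
    (f : V → X) (f' : V' → X)
    (p : V → N → Option (V × N)) (p' : V' → N → Option (V' × N)) :
    ℕ → V → V' → Prop
  | 0, v, v' => deg G v = deg G' v' ∧ f v = f' v'
  | r + 1, v, v' =>
      (deg G v = deg G' v' ∧ f v = f' v') ∧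
      (∀ w, G.Adj v w → ∃ w', G'.Adj v' w' ∧
        SVBisim G G' f f' p p' r w w' ∧
        ∃ a b c, p w a = some (v, b) ∧ p' w' a = some (v', c)) ∧
      (∀ w', G'.Adj v' w' → ∃ w, G.Adj v w ∧
        SVBisim G G' f f' p p' r w w' ∧
        ∃ a b c, p w a = some (v, b) ∧ p' w' a = some (v', c))

/-- Nodes of the tree `G_d` are finite sequences of pairs of numbers.
We represent a sequence `(a₁, …, a_i)` as the list `[a_i, …, a₁]`, i.e. in
reverse order, so that consing corresponds to appending a pair at the end. -/
abbrev Nd : Type := ℕ × ℕ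

/-- `b₂⁺`: `1` if `b₂ = 0`, and `b₂` otherwise. -/
def bplus (b : ℕ) : ℕ := if b = 0 then 1 else b

/-- For `j ≥ 1`, the `j`-th smallest element of `{lo, lo+1, lo+2, …} \ {f}`.
This realises the greedy choices `c^j = min({lo,…} \ {f, c¹, …, c^{j-1}})`. -/
def nthAvoid (lo f j : ℕ) : ℕ :=
  if lo + j - 1 < f ∨ f < lo then lo + j - 1 else lo + j

/-- The node set `V_d` of the graph `G_d`, given by the rules (G1)–(G4).
(Sequences are represented as reversed lists, the head being the last pair
`a_i` of the sequence.) -/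
inductive Vd (d : ℕ) : List Nd → Prop
  /-- (G1): the empty sequence is a node. -/
  | nil : Vd d []
  /-- (G2): the sequences `((1,0)), ((2,1)), …, ((d,d−1))` are nodes. -/
  | base (k : ℕ) (h1 : 1 ≤ k) (h2 : k ≤ d) : Vd d [(k, k - 1)]
  /-- (G3): children of a node of odd length `< 2d` with last pair `(b₁, b₂)`:
  for `j = 1, …, d−1` append `(c₁ʲ, c₂ʲ)` where `c₁ʲ` is the `j`-th smallest
  element of `{1,…,d} \ {b₂⁺}` and `c₂ʲ` the `j`-th smallest of `{1,…,d} \ {b₁}`. -/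
  | odd (b₁ b₂ : ℕ) (rest : List Nd)
      (hv : Vd d ((b₁, b₂) :: rest))
      (hodd : Odd ((b₁, b₂) :: rest).length)
      (hlt : ((b₁, b₂) :: rest).length < 2 * d)
      (j : ℕ) (hj1 : 1 ≤ j) (hj2 : j ≤ d - 1) :
      Vd d ((nthAvoid 1 (bplus b₂) j, nthAvoid 1 b₁ j) :: (b₁, b₂) :: rest)
  /-- (G4): children of a node of even positive length `< 2d` with last pair
  `(b₁, b₂)`: for `j = 1, …, d−1` append `(c₁ʲ, c₂ʲ)` where `c₁ʲ` is the `j`-th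
  smallest element of `{1,…,d} \ {b₂}` and `c₂ʲ` the `j`-th smallest of
  `{0,…,d−1} \ {b₁}`. -/
  | even (b₁ b₂ : ℕ) (rest : List Nd)
      (hv : Vd d ((b₁, b₂) :: rest))
      (heven : Even ((b₁, b₂) :: rest).length)
      (hlt : ((b₁, b₂) :: rest).length < 2 * d)
      (j : ℕ) (hj1 : 1 ≤ j) (hj2 : j ≤ d - 1) :
      Vd d ((nthAvoid 1 b₂ j, nthAvoid 0 b₁ j) :: (b₁, b₂) :: rest)

/-- The edge relation of `G_d`: `u` is a child of `v` or vice versa. -/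
def Ed (d : ℕ) (v u : List Nd) : Prop :=
  Vd d v ∧ Vd d u ∧ ∃ a : Nd, u = a :: v ∨ v = a :: u

/-- The outgoing port number `π_d(v, u)` from `v` towards an adjacent node `u`:
if `u = (b₁, b₂) :: v` is a child of `v` then `b₁`, and if `v = (b₁, b₂) :: u`
is a child of `u` then `b₂`. -/
def outPort (v u : List Nd) : ℕ :=
  if u.length = v.length + 1 then u.headI.1 else v.headI.2

/-- A pair of compatible walks (PCW) of length `k` in `G_d`:
two walks starting at `((1,0))` and `((2,1))` such that the outgoing port
numbers backwards along the walks coincide. -/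
structure IsPCW (d k : ℕ) (w₁ w₂ : ℕ → List Nd) : Prop where
  klen : k ≤ 2 * d - 3
  walk₁ : ∀ j < k, Ed d (w₁ j) (w₁ (j + 1))
  walk₂ : ∀ j < k, Ed d (w₂ j) (w₂ (j + 1))
  start₁ : w₁ 0 = [(1, 0)]
  start₂ : w₂ 0 = [(2, 1)]
  compat : ∀ j, 1 ≤ j → j ≤ k →
    outPort (w₁ j) (w₁ (j - 1)) = outPort (w₂ j) (w₂ (j - 1))

/-- A pair of separating walks (PSW): a PCW such that the last node of the
first walk has a neighbour whose outgoing port number towards it is matched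
by no neighbour of the last node of the second walk. -/
structure IsPSW (d k : ℕ) (w₁ w₂ : ℕ → List Nd)
    extends IsPCW d k w₁ w₂ : Prop where
  sep : ∃ x, Ed d (w₁ k) x ∧
    ∀ y, Ed d (w₂ k) y → outPort x (w₁ k) ≠ outPort y (w₂ k)

/-- A PSW of length `k` in `G_d` is critical if there is no strictly shorter
PSW in `G_d`. -/
def IsCriticalPSW (d k : ℕ) (w₁ w₂ : ℕ → List Nd) : Prop :=
  IsPSW d k w₁ w₂ ∧ ∀ k' w₁' w₂', IsPSW d k' w₁' w₂' → k ≤ k'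

/-- The graph `G_d` as a simple graph on all lists of pairs (the vertices
outside `V_d` are isolated). -/
def GdGraph (d : ℕ) : SimpleGraph (List Nd) where
  Adj v u := Ed d v u
  symm := by
    constructor
    rintro v u ⟨hv, hu, a, h⟩
    exact ⟨hu, hv, a, h.symm⟩
  loopless := by
    constructor
    rintro v ⟨-, -, a, h | h⟩ <;>
      exact absurd (congrArg List.length h) (by simp)

open Classical in
/-- The generalised port numbering `p_d` of `G_d`: for a node `v` with child
`u = (b₁, b₂) :: v`, we have `p_d (v, b₁) = (u, b₂)` and `p_d (u, b₂) = (v, b₁)`. -/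
noncomputable def pd (d : ℕ) (v : List Nd) (n : ℕ) : Option (List Nd × ℕ) :=
  if h : ∃ c₂ : ℕ, Vd d ((n, c₂) :: v) then
    some ((n, h.choose) :: v, h.choose)
  else
    match v with
    | (b₁, b₂) :: w =>
        if b₂ = n ∧ Vd d ((b₁, b₂) :: w) then some (w, b₁) else none
    | [] => none

/-- The three colours: black, white, grey. -/
inductive Col : Type
  | B | W | G
deriving DecidableEq

/-- The complementary colour: `B̄ = W`, `W̄ = B` (grey is left untouched). -/
def Col.flip : Col → Col
  | Col.B => Col.W
  | Col.W => Col.B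
  | Col.G => Col.G


/-- Nodes of the trees `H_{C,d}` are finite sequences of triples
(number, number, colour), represented as reversed lists. -/
abbrev Nd3 : Type := ℕ × ℕ × Col

/-- The colouring `f_C`: the root gets grey, any other node the colour
component of its last triple. -/
def fH : List Nd3 → Col
  | [] => Col.G
  | (_, _, c) :: _ => c

/-- The node set `V_{C,d}` of the graph `H_{C,d}`, given by rules (H1)–(H6). -/
inductive VH (C : Col) (d : ℕ) : List Nd3 → Prop
  /-- (H1): the empty sequence is a node. -/
  | nil : VH C d []
  /-- (H2): the sequences `((1,0,C)), ((2,1,C)), …, ((d,d−1,C))`. -/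
  | base (k : ℕ) (h1 : 1 ≤ k) (h2 : k ≤ d) : VH C d [(k, k - 1, C)]
  /-- (H3): the sequences `((2,1,C̄)), …, ((d,d−1,C̄))`. -/
  | base' (k : ℕ) (h1 : 2 ≤ k) (h2 : k ≤ d) : VH C d [(k, k - 1, Col.flip C)]
  /-- (H4): grey children of a node of odd length `< 2d` with last triple
  `(b₁, b₂, c)`, `c ∈ {B, W}`. -/
  | odd (b₁ b₂ : ℕ) (c : Col) (rest : List Nd3)
      (hc : c ≠ Col.G)
      (hv : VH C d ((b₁, b₂, c) :: rest))
      (hodd : Odd ((b₁, b₂, c) :: rest).length)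
      (hlt : ((b₁, b₂, c) :: rest).length < 2 * d)
      (j : ℕ) (hj1 : 1 ≤ j) (hj2 : j ≤ d - 1) :
      VH C d ((nthAvoid 1 (bplus b₂) j, nthAvoid 1 b₁ j, Col.G) ::
        (b₁, b₂, c) :: rest)
  /-- (H5): children of colour `c` of a grey node of even positive length
  `< 2d` with last triple `(b₁, b₂, G)` and previous triple `(d₁, d₂, c)`,
  `c ∈ {B, W}`. -/
  | evenSame (b₁ b₂ d₁ d₂ : ℕ) (c : Col) (rest : List Nd3)
      (hc : c ≠ Col.G)
      (hv : VH C d ((b₁, b₂, Col.G) :: (d₁, d₂, c) :: rest))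
      (heven : Even ((b₁, b₂, Col.G) :: (d₁, d₂, c) :: rest).length)
      (hlt : ((b₁, b₂, Col.G) :: (d₁, d₂, c) :: rest).length < 2 * d)
      (j : ℕ) (hj1 : 1 ≤ j) (hj2 : j ≤ d - 1) :
      VH C d ((nthAvoid 1 b₂ j, nthAvoid 0 b₁ j, c) ::
        (b₁, b₂, Col.G) :: (d₁, d₂, c) :: rest)
  /-- (H6): children of colour `c̄` of a grey node of even positive length
  `< 2d` with previous triple `(d₁, d₂, c)`, `c ∈ {B, W}`; here
  `c₁ʲ = min({2,…,d} \ {c₁¹,…}) = j + 1` and `c₂ʲ = min({1,…,d−1} \ {c₂¹,…}) = j`. -/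
  | evenFlip (b₁ b₂ d₁ d₂ : ℕ) (c : Col) (rest : List Nd3)
      (hc : c ≠ Col.G)
      (hv : VH C d ((b₁, b₂, Col.G) :: (d₁, d₂, c) :: rest))
      (heven : Even ((b₁, b₂, Col.G) :: (d₁, d₂, c) :: rest).length)
      (hlt : ((b₁, b₂, Col.G) :: (d₁, d₂, c) :: rest).length < 2 * d)
      (j : ℕ) (hj1 : 1 ≤ j) (hj2 : j ≤ d - 1) :
      VH C d ((j + 1, j, Col.flip c) ::
        (b₁, b₂, Col.G) :: (d₁, d₂, c) :: rest)

/-- The edge relation of `H_{C,d}`. -/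
def EH (C : Col) (d : ℕ) (v u : List Nd3) : Prop :=
  VH C d v ∧ VH C d u ∧ ∃ a : Nd3, u = a :: v ∨ v = a :: u

/-- The graph `H_{C,d}` as a simple graph on all lists of triples. -/
def HGraph (C : Col) (d : ℕ) : SimpleGraph (List Nd3) where
  Adj v u := EH C d v u
  symm := by
    constructor
    rintro v u ⟨hv, hu, a, h⟩
    exact ⟨hu, hv, a, h.symm⟩
  loopless := by
    constructor
    rintro v ⟨-, -, a, h | h⟩ <;>
      exact absurd (congrArg List.length h) (by simp)

/-- Membership in the induced subgraph `Ĥ_{C,d}`: every prefix of the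
sequence (i.e. every suffix of the reversed list) is grey or of colour `C`. -/
def inHat (C : Col) (v : List Nd3) : Prop :=
  ∀ s : List Nd3, s <:+ v → (fH s = C ∨ fH s = Col.G)

/-- The induced subgraph `Ĥ_{C,d}` of `H_{C,d}`. -/
def HhatGraph (C : Col) (d : ℕ) : SimpleGraph (List Nd3) where
  Adj v u := EH C d v u ∧ inHat C v ∧ inHat C u
  symm := by
    constructor
    rintro v u ⟨⟨hv, hu, a, h⟩, h1, h2⟩
    exact ⟨⟨hu, hv, a, h.symm⟩, h2, h1⟩
  loopless := by
    constructor
    rintro v ⟨⟨-, -, a, h | h⟩, -, -⟩ <;>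
      exact absurd (congrArg List.length h) (by simp)

open Classical in
/-- The generalised port numbering `p_C` of `H_{C,d}`, with port numbers that
are pairs (number, colour): along the edge between a node and its child, each
of the two outgoing port labels consists of the corresponding number of the
child's last triple together with the colour of the node at the other end. -/
noncomputable def pH (C : Col) (d : ℕ) (v : List Nd3) (q : ℕ × Col) :
    Option (List Nd3 × (ℕ × Col)) :=
  if h : ∃ c₂ : ℕ, VH C d ((q.1, c₂, q.2) :: v) then
    some ((q.1, h.choose, q.2) :: v, (h.choose, fH v))
  else
    match v with
    | (b₁, b₂, cv) :: w =>
        if q = (b₂, fH w) ∧ VH C d ((b₁, b₂, cv) :: w) then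
          some (w, (b₁, cv))
        else none
    | [] => none

open Classical in
/-- The restriction of the generalised port numbering `p_C` to the induced
subgraph `Ĥ_{C,d}`. -/
noncomputable def pHhat (C : Col) (d : ℕ) (v : List Nd3) (q : ℕ × Col) :
    Option (List Nd3 × (ℕ × Col)) :=
  match pH C d v q with
  | some (u, a) => if inHat C v ∧ inHat C u then some (u, a) else none
  | none => none

/-- The isomorphism `g_C` from `Ĥ_{C,d}` to `G_d`: forget the colours. -/
def gC (v : List Nd3) : List Nd := v.map (fun t => (t.1, t.2.1))

/-! ### Auxiliary lemmas -/

lemma nthAvoid_ge {lo f j : ℕ} (hj : 1 ≤ j) : lo ≤ nthAvoid lo f j := by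
  unfold nthAvoid; split <;> omega

lemma nthAvoid_one_ne {f j : ℕ} (hj : 1 ≤ j) : nthAvoid 1 f j ≠ f := by
  unfold nthAvoid; split <;> omega

lemma nthAvoid_bplus_ne {b j : ℕ} (hj : 1 ≤ j) : nthAvoid 1 (bplus b) j ≠ b := by
  by_cases hb : b = 0 <;> simp only [nthAvoid, bplus, hb, if_true, if_false] <;>
    split <;> omega

lemma nthAvoid_inj {lo f j j' : ℕ} (hj : 1 ≤ j) (hj' : 1 ≤ j')
    (h : nthAvoid lo f j = nthAvoid lo f j') : j = j' := by
  unfold nthAvoid at h; split at h <;> split at h <;> omega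

lemma VH_tail {C : Col} {d : ℕ} {a : Nd3} {l : List Nd3}
    (h : VH C d (a :: l)) : VH C d l := by
  cases h <;> first | exact VH.nil | assumption

lemma inHat_suffix {C : Col} {v s : List Nd3} (h : inHat C v) (hs : s <:+ v) :
    inHat C s := fun t ht => h t (ht.trans hs)

lemma inHat_tail {C : Col} {a : Nd3} {l : List Nd3} (h : inHat C (a :: l)) :
    inHat C l := inHat_suffix h (List.suffix_cons a l)

/-- Assign colours to a colourless sequence according to parity of position. -/
def colorize (C : Col) : List Nd → List Nd3
  | [] => []
  | a :: l => (a.1, a.2, if l.length % 2 = 0 then C else Col.G) :: colorize C l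

lemma gC_colorize (C : Col) (x : List Nd) : gC (colorize C x) = x := by
  induction x with
  | nil => rfl
  | cons a l ih => simp [colorize, gC] at ih ⊢; exact ih

lemma length_colorize (C : Col) (x : List Nd) :
    (colorize C x).length = x.length := by
  induction x with
  | nil => rfl
  | cons a l ih => simp [colorize, ih]

lemma length_gC (v : List Nd3) : (gC v).length = v.length := by
  simp [gC]

lemma fH_colorize (C : Col) (x : List Nd) :
    fH (colorize C x) = if x.length % 2 = 1 then C else Col.G := by
  cases x with
  | nil => simp [colorize, fH]
  | cons a l =>
      rcases Nat.mod_two_eq_zero_or_one l.length with h | h <;>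
        simp [colorize, fH, h, Nat.add_mod]

lemma inHat_colorize (C : Col) (x : List Nd) : inHat C (colorize C x) := by
  induction x with
  | nil =>
      intro s hs
      simp only [colorize] at hs
      rw [List.suffix_nil.mp hs]; right; rfl
  | cons a l ih =>
      intro s hs
      rcases (List.suffix_cons_iff.mp hs) with h | h
      · subst h
        rcases Nat.mod_two_eq_zero_or_one l.length with h | h <;>
          simp [fH, h]
      · exact ih s h

/-- Inversion for `Vd` on a nonempty list. -/
lemma Vd_cons_inv {d : ℕ} {a : Nd} {w : List Nd} (h : Vd d (a :: w)) :
    (w = [] ∧ ∃ k, 1 ≤ k ∧ k ≤ d ∧ a = (k, k - 1)) ∨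
    (∃ b₁ b₂ rest, w = (b₁, b₂) :: rest ∧ Vd d w ∧ w.length < 2 * d ∧
      ∃ j, 1 ≤ j ∧ j ≤ d - 1 ∧
        ((Odd w.length ∧ a = (nthAvoid 1 (bplus b₂) j, nthAvoid 1 b₁ j)) ∨
         (Even w.length ∧ a = (nthAvoid 1 b₂ j, nthAvoid 0 b₁ j)))) := by
  cases h with
  | base k h1 h2 => exact Or.inl ⟨rfl, k, h1, h2, rfl⟩
  | odd b₁ b₂ rest hv hodd hlt j hj1 hj2 =>
      exact Or.inr ⟨b₁, b₂, rest, rfl, hv, hlt, j, hj1, hj2,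
        Or.inl ⟨hodd, rfl⟩⟩
  | even b₁ b₂ rest hv heven hlt j hj1 hj2 =>
      exact Or.inr ⟨b₁, b₂, rest, rfl, hv, hlt, j, hj1, hj2,
        Or.inr ⟨heven, rfl⟩⟩

/-- Inversion for `VH` on a nonempty list. -/
lemma VH_cons_inv {C : Col} {d : ℕ} {a : Nd3} {w : List Nd3}
    (h : VH C d (a :: w)) :
    (w = [] ∧ ∃ k, 1 ≤ k ∧ k ≤ d ∧
      (a = (k, k - 1, C) ∨ (2 ≤ k ∧ a = (k, k - 1, Col.flip C)))) ∨
    (∃ b₁ b₂ c rest, w = (b₁, b₂, c) :: rest ∧ VH C d w ∧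
      w.length < 2 * d ∧
      ((Odd w.length ∧ c ≠ Col.G ∧ ∃ j, 1 ≤ j ∧ j ≤ d - 1 ∧
          a = (nthAvoid 1 (bplus b₂) j, nthAvoid 1 b₁ j, Col.G)) ∨
       (Even w.length ∧ c = Col.G ∧
        ∃ d₁ d₂ c' rest', rest = (d₁, d₂, c') :: rest' ∧ c' ≠ Col.G ∧
          ∃ j, 1 ≤ j ∧ j ≤ d - 1 ∧
            (a = (nthAvoid 1 b₂ j, nthAvoid 0 b₁ j, c') ∨
             a = (j + 1, j, Col.flip c'))))) := by
  cases h with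
  | base k h1 h2 => exact Or.inl ⟨rfl, k, h1, h2, Or.inl rfl⟩
  | base' k h1 h2 =>
      exact Or.inl ⟨rfl, k, le_trans one_le_two h1, h2, Or.inr ⟨h1, rfl⟩⟩
  | odd b₁ b₂ c rest hc hv hodd hlt j hj1 hj2 =>
      exact Or.inr ⟨b₁, b₂, c, rest, rfl, hv, hlt,
        Or.inl ⟨hodd, hc, j, hj1, hj2, rfl⟩⟩
  | evenSame b₁ b₂ d₁ d₂ c rest hc hv heven hlt j hj1 hj2 =>
      exact Or.inr ⟨b₁, b₂, Col.G, (d₁, d₂, c) :: rest, rfl, hv, hlt,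
        Or.inr ⟨heven, rfl, d₁, d₂, c, rest, rfl, hc, j, hj1, hj2, Or.inl rfl⟩⟩
  | evenFlip b₁ b₂ d₁ d₂ c rest hc hv heven hlt j hj1 hj2 =>
      exact Or.inr ⟨b₁, b₂, Col.G, (d₁, d₂, c) :: rest, rfl, hv, hlt,
        Or.inr ⟨heven, rfl, d₁, d₂, c, rest, rfl, hc, j, hj1, hj2, Or.inr rfl⟩⟩

lemma flip_ne_self {C : Col} (hC : C ≠ Col.G) : Col.flip C ≠ C := by
  cases C <;> simp [Col.flip] at hC ⊢

lemma flip_ne_G {C : Col} (hC : C ≠ Col.G) : Col.flip C ≠ Col.G := by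
  cases C <;> simp [Col.flip] at hC ⊢

/-- In `Ĥ_{C,d}`, the colours are determined by the parity of the position. -/
lemma colorize_gC_cons (C : Col) (a : Nd3) (l : List Nd3) :
    colorize C (gC (a :: l)) =
      (a.1, a.2.1, if l.length % 2 = 0 then C else Col.G) :: colorize C (gC l) := by
  simp [gC, colorize]

lemma not_inHat_flip {C : Col} (hC : C ≠ Col.G) {c : Col} (hc : c = C)
    {a₁ a₂ : ℕ} {l : List Nd3}
    (hhat : inHat C ((a₁, a₂, Col.flip c) :: l)) : False := by
  subst hc
  rcases hhat _ (List.suffix_refl _) with h | h <;>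
    simp only [fH] at h <;>
    [exact absurd h (flip_ne_self hC); exact absurd h (flip_ne_G hC)]

/-- In `Ĥ_{C,d}`, the colours are determined by the parity of the position. -/
lemma eq_colorize {C : Col} (hC : C ≠ Col.G) {d : ℕ} {v : List Nd3}
    (hv : VH C d v) : inHat C v → v = colorize C (gC v) := by
  induction hv with
  | nil => intro _; rfl
  | base k h1 h2 => intro _; simp [gC, colorize]
  | base' k h1 h2 =>
      intro hhat
      exact (not_inHat_flip hC rfl hhat).elim
  | odd b₁ b₂ c rest hc hv hodd hlt j hj1 hj2 ih =>
      intro hhat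
      have h2 := ih (inHat_tail hhat)
      have hlen : rest.length % 2 = 0 := by
        rcases hodd with ⟨m, hm⟩; simp at hm; omega
      rw [colorize_gC_cons, ← h2]
      simp only [List.length_cons]
      rw [if_neg (by omega)]
  | evenSame b₁ b₂ d₁ d₂ c rest hc hv heven hlt j hj1 hj2 ih =>
      intro hhat
      have h2 := ih (inHat_tail hhat)
      have hlen : rest.length % 2 = 0 := by
        rcases heven with ⟨m, hm⟩; simp at hm; omega
      have h4 : (d₁, d₂, c) :: rest =
          colorize C (gC ((d₁, d₂, c) :: rest)) := by
        have := congrArg List.tail h2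
        rwa [colorize_gC_cons, List.tail_cons, List.tail_cons] at this
      have hc' : c = C := by
        have h5 := congrArg fH h4
        rw [fH_colorize, length_gC] at h5
        simp only [fH, List.length_cons] at h5
        rwa [if_pos (by omega)] at h5
      rw [colorize_gC_cons, ← h2]
      simp only [List.length_cons]
      rw [if_pos (by omega), hc']
  | evenFlip b₁ b₂ d₁ d₂ c rest hc hv heven hlt j hj1 hj2 ih =>
      intro hhat
      have h2 := ih (inHat_tail hhat)
      have hlen : rest.length % 2 = 0 := by
        rcases heven with ⟨m, hm⟩; simp at hm; omega
      have h4 : (d₁, d₂, c) :: rest =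
          colorize C (gC ((d₁, d₂, c) :: rest)) := by
        have := congrArg List.tail h2
        rwa [colorize_gC_cons, List.tail_cons, List.tail_cons] at this
      have hc' : c = C := by
        have h5 := congrArg fH h4
        rw [fH_colorize, length_gC] at h5
        simp only [fH, List.length_cons] at h5
        rwa [if_pos (by omega)] at h5
      exact (not_inHat_flip hC hc' hhat).elim

/-- The colour of a node of `Ĥ_{C,d}` is determined by the parity of its
length. -/
lemma fH_eq_parity {C : Col} (hC : C ≠ Col.G) {d : ℕ} {v : List Nd3}
    (hv : VH C d v) (hhat : inHat C v) :
    fH v = if v.length % 2 = 1 then C else Col.G := by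
  conv_lhs => rw [eq_colorize hC hv hhat]
  rw [fH_colorize, length_gC]

lemma head_col_eq {C : Col} (hC : C ≠ Col.G) {d d₁ d₂ : ℕ} {c : Col}
    {rest : List Nd3} (hv : VH C d ((d₁, d₂, c) :: rest))
    (hhat : inHat C ((d₁, d₂, c) :: rest)) (hlen : rest.length % 2 = 0) :
    c = C := by
  have := fH_eq_parity hC hv hhat
  simp only [fH, List.length_cons] at this
  rwa [if_pos (by omega)] at this

/-- `g_C` maps nodes of `Ĥ_{C,d}` to nodes of `G_d`. -/
lemma gC_Vd {C : Col} (hC : C ≠ Col.G) {d : ℕ} {v : List Nd3}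
    (hv : VH C d v) : inHat C v → Vd d (gC v) := by
  induction hv with
  | nil => intro _; exact Vd.nil
  | base k h1 h2 => intro _; exact Vd.base k h1 h2
  | base' k h1 h2 =>
      intro _; exact Vd.base k (le_trans one_le_two h1) h2
  | odd b₁ b₂ c rest hc hv hodd hlt j hj1 hj2 ih =>
      intro hhat
      have := Vd.odd b₁ b₂ (gC rest) (ih (inHat_tail hhat))
        (by simpa [gC, length_gC] using hodd)
        (by simpa [gC, length_gC] using hlt) j hj1 hj2
      simpa [gC] using this
  | evenSame b₁ b₂ d₁ d₂ c rest hc hv heven hlt j hj1 hj2 ih =>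
      intro hhat
      have := Vd.even b₁ b₂ ((d₁, d₂) :: gC rest)
        (by simpa [gC] using ih (inHat_tail hhat))
        (by simpa [gC, length_gC] using heven)
        (by simpa [gC, length_gC] using hlt) j hj1 hj2
      simpa [gC] using this
  | evenFlip b₁ b₂ d₁ d₂ c rest hc hv heven hlt j hj1 hj2 ih =>
      intro hhat
      exfalso
      have hlen : rest.length % 2 = 0 := by
        rcases heven with ⟨m, hm⟩; simp at hm; omega
      have hc' : c = C := head_col_eq hC (VH_tail hv)
        (inHat_tail (inHat_tail hhat)) hlen
      exact not_inHat_flip hC hc' hhat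

/-- `colorize` maps nodes of `G_d` to nodes of `Ĥ_{C,d}`. -/
lemma colorize_VH {C : Col} (hC : C ≠ Col.G) {d : ℕ} {x : List Nd}
    (hx : Vd d x) : VH C d (colorize C x) := by
  induction hx with
  | nil => exact VH.nil
  | base k h1 h2 => simpa [colorize] using VH.base k h1 h2
  | odd b₁ b₂ rest hv hodd hlt j hj1 hj2 ih =>
      have hlen : rest.length % 2 = 0 := by
        rcases hodd with ⟨m, hm⟩
        simp at hm; omega
      have ih' : VH C d ((b₁, b₂, C) :: colorize C rest) := by
        simpa [colorize, hlen] using ih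
      have := VH.odd b₁ b₂ C (colorize C rest) hC ih'
        (by simpa [length_colorize] using hodd)
        (by simpa [length_colorize] using hlt) j hj1 hj2
      simpa [colorize, hlen, Nat.add_mod] using this
  | even b₁ b₂ rest hv heven hlt j hj1 hj2 ih =>
      match rest, heven with
      | [], heven => simp at heven
      | (d₁, d₂) :: rest', heven =>
        have hlen : rest'.length % 2 = 0 := by
          rcases heven with ⟨m, hm⟩
          simp at hm; omega
        have ih' : VH C d ((b₁, b₂, Col.G) :: (d₁, d₂, C) :: colorize C rest') := by
          simpa [colorize, hlen, Nat.add_mod] using ih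
        have := VH.evenSame b₁ b₂ d₁ d₂ C (colorize C rest') hC ih'
          (by simpa [length_colorize] using heven)
          (by simpa [length_colorize] using hlt) j hj1 hj2
        simpa [colorize, hlen, Nat.add_mod] using this

/-- Children of a node of `H_{C,d}` are determined by their first coordinate
and their colour. -/
lemma VH_child_unique {C : Col} (hC : C ≠ Col.G) {d n c₂ c₂' : ℕ}
    {col : Col} {w : List Nd3}
    (h : VH C d ((n, c₂, col) :: w)) (h' : VH C d ((n, c₂', col) :: w)) :
    c₂ = c₂' := by
  rcases VH_cons_inv h with ⟨hw, k, hk1, hk2, ha⟩ |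
    ⟨b₁, b₂, c, rest, hw, _, _, hbr⟩
  · rcases VH_cons_inv h' with ⟨-, k', hk1', hk2', ha'⟩ |
      ⟨b₁', b₂', c', rest', hw', -, -, -⟩
    · rcases ha with h1 | ⟨hk2a, h1⟩ <;> rcases ha' with h1' | ⟨hk2a', h1'⟩ <;>
        simp only [Prod.mk.injEq] at h1 h1' <;>
        obtain ⟨e1, e2, e3⟩ := h1 <;> obtain ⟨e1', e2', e3'⟩ := h1'
      · omega
      · exact absurd (e3'.symm.trans e3) (flip_ne_self hC)
      · exact absurd (e3.symm.trans e3') (flip_ne_self hC)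
      · omega
    · rw [hw] at hw'; simp at hw'
  · rcases VH_cons_inv h' with ⟨hw', -⟩ |
      ⟨b₁', b₂', c', rest', hw', -, -, hbr'⟩
    · rw [hw'] at hw; simp at hw
    · rw [hw] at hw'
      simp only [List.cons.injEq, Prod.mk.injEq] at hw'
      obtain ⟨⟨e1, e2, e3⟩, e4⟩ := hw'
      subst e1; subst e2; subst e3; subst e4
      rcases hbr with ⟨hodd, -, j, hj1, hj2, ha⟩ |
        ⟨heven, -, d₁, d₂, cc, rest₂, hr, hccG, j, hj1, hj2, ha⟩
      · rcases hbr' with ⟨-, -, j', hj1', hj2', ha'⟩ |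
          ⟨heven', -, -, -, -, -, -, -, -, -, -, -⟩
        · simp only [Prod.mk.injEq] at ha ha'
          obtain ⟨e1, e2, -⟩ := ha; obtain ⟨e1', e2', -⟩ := ha'
          have : j = j' := nthAvoid_inj hj1 hj1' (e1.symm.trans e1')
          subst this
          exact e2.trans e2'.symm
        · exact absurd hodd (Nat.not_odd_iff_even.mpr heven')
      · rcases hbr' with ⟨hodd', -, -, -, -, -⟩ |
          ⟨-, -, d₁', d₂', cc', rest₂', hr', hccG', j', hj1', hj2', ha'⟩
        · exact absurd hodd' (Nat.not_odd_iff_even.mpr heven)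
        · rw [hr] at hr'
          simp only [List.cons.injEq, Prod.mk.injEq] at hr'
          obtain ⟨⟨f1, f2, f3⟩, f4⟩ := hr'
          subst f3
          rcases ha with ha | ha <;> rcases ha' with ha' | ha' <;>
            simp only [Prod.mk.injEq] at ha ha' <;>
            obtain ⟨e1, e2, e3⟩ := ha <;> obtain ⟨e1', e2', e3'⟩ := ha'
          · have : j = j' := nthAvoid_inj hj1 hj1' (e1.symm.trans e1')
            subst this
            exact e2.trans e2'.symm
          · exact absurd (e3'.symm.trans e3) (flip_ne_self hccG)
          · exact absurd (e3.symm.trans e3') (flip_ne_self hccG)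
          · omega

/-- No node of `H_{C,d}` with parent pair `(b₁, b₂)` has a child whose first
coordinate is `b₂` and whose colour is that of the grandparent. -/
lemma no_child_clash {C : Col} (hC : C ≠ Col.G) {d b₁ b₂ : ℕ} {cw : Col}
    {v : List Nd3} (hw : VH C d ((b₁, b₂, cw) :: v)) (c₂ : ℕ) :
    ¬ VH C d ((b₂, c₂, fH v) :: (b₁, b₂, cw) :: v) := by
  intro h
  rcases VH_cons_inv h with ⟨hnil, -⟩ |
    ⟨B₁, B₂, c, rest, heq, -, -, hbr⟩
  · simp at hnil
  · simp only [List.cons.injEq, Prod.mk.injEq] at heq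
    obtain ⟨⟨e1, e2, e3⟩, e4⟩ := heq
    subst e1; subst e2; subst e3; subst e4
    rcases hbr with ⟨-, -, j, hj1, hj2, ha⟩ |
      ⟨-, -, d₁, d₂, c', rest', hrest, hc'ne, j, hj1, hj2, ha | ha⟩ <;>
      simp only [Prod.mk.injEq] at ha
    · exact absurd ha.1.symm (nthAvoid_bplus_ne hj1)
    · exact absurd ha.1.symm (nthAvoid_one_ne hj1)
    · obtain ⟨-, -, e⟩ := ha
      rw [hrest] at e
      simp only [fH] at e
      exact absurd e.symm (flip_ne_self hc'ne)

/-- A neighbour in `G_d` of the image of a node of `Ĥ_{C,d}` lifts to a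
neighbour in `Ĥ_{C,d}`. -/
lemma lift_adj {C : Col} (hC : C ≠ Col.G) {d : ℕ} {u : List Nd3}
    {w₀ : List Nd} (hu : VH C d u) (huhat : inHat C u)
    (hadj : Ed d (gC u) w₀) :
    (HhatGraph C d).Adj u (colorize C w₀) ∧ gC (colorize C w₀) = w₀ := by
  obtain ⟨hgu, hw₀, s, hs | hs⟩ := hadj
  · refine ⟨⟨⟨hu, colorize_VH hC hw₀,
      (s.1, s.2, if (gC u).length % 2 = 0 then C else Col.G), Or.inl ?_⟩,
      huhat, inHat_colorize C w₀⟩, gC_colorize C w₀⟩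
    rw [hs]
    simp only [colorize]
    rw [← eq_colorize hC hu huhat]
  · match u, hs with
    | [], hs => simp [gC] at hs
    | t :: u', hs =>
      have hs' : s = (t.1, t.2.1) ∧ w₀ = gC u' := by
        have : gC (t :: u') = (t.1, t.2.1) :: gC u' := rfl
        rw [this] at hs
        exact ⟨(List.cons.inj hs).1.symm, (List.cons.inj hs).2.symm⟩
      have hu' : VH C d u' := VH_tail hu
      have hu'hat : inHat C u' := inHat_tail huhat
      have hcw : colorize C w₀ = u' := by
        rw [hs'.2, ← eq_colorize hC hu' hu'hat]
      rw [hcw]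
      exact ⟨⟨⟨hu, hu', t, Or.inr rfl⟩, huhat, hu'hat⟩,
        hs'.2.symm⟩

/-- `g_C` preserves degrees. -/
lemma deg_hat {C : Col} (hC : C ≠ Col.G) {d : ℕ} {v : List Nd3}
    (hv : VH C d v) (hvhat : inHat C v) :
    deg (HhatGraph C d) v = deg (GdGraph d) (gC v) := by
  have himg : gC '' {u | (HhatGraph C d).Adj v u} =
      {x | (GdGraph d).Adj (gC v) x} := by
    ext x
    constructor
    · rintro ⟨u, hu, rfl⟩
      obtain ⟨⟨hv', huVH, t, ht | ht⟩, -, huhat⟩ := hu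
      · exact ⟨gC_Vd hC hv hvhat, gC_Vd hC huVH huhat, (t.1, t.2.1),
          Or.inl (by rw [ht]; rfl)⟩
      · exact ⟨gC_Vd hC hv hvhat, gC_Vd hC huVH huhat, (t.1, t.2.1),
          Or.inr (by rw [ht]; rfl)⟩
    · intro hx
      have h := lift_adj hC hv hvhat hx
      exact ⟨colorize C x, h.1, h.2⟩
  have hinj : Set.InjOn gC {u | (HhatGraph C d).Adj v u} := by
    intro u1 h1 u2 h2 he
    obtain ⟨⟨-, h1VH, -⟩, -, h1hat⟩ := h1
    obtain ⟨⟨-, h2VH, -⟩, -, h2hat⟩ := h2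
    rw [eq_colorize hC h1VH h1hat, eq_colorize hC h2VH h2hat, he]
  unfold deg
  rw [← himg, Set.ncard_image_of_injOn hinj]

/-- A port of `p_d` along the image of an edge of `Ĥ_{C,d}` lifts to a port
of `p_C` (restricted to `Ĥ_{C,d}`) with the same number component. -/
lemma port_lift {C : Col} (hC : C ≠ Col.G) {d : ℕ} {v w : List Nd3}
    {a : ℕ} {b : ℕ}
    (hv : VH C d v) (hw : VH C d w)
    (hvhat : inHat C v) (hwhat : inHat C w)
    (hadj : ∃ t : Nd3, w = t :: v ∨ v = t :: w)
    (hp : pd d (gC w) a = some (gC v, b)) :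
    ∃ β, pHhat C d w (a, fH v) = some (v, β) := by
  obtain ⟨t, ht | ht⟩ := hadj
  · -- `v` is the parent of `w`
    obtain ⟨b₁, b₂, cw⟩ := t
    subst ht
    have hgw : gC ((b₁, b₂, cw) :: v) = (b₁, b₂) :: gC v := rfl
    -- determine `a = b₂` from `hp`
    have ha : a = b₂ := by
      rw [hgw] at hp
      unfold pd at hp
      split at hp
      · simp only [Option.some.injEq, Prod.mk.injEq] at hp
        have := congrArg List.length hp.1
        simp only [List.length_cons, length_gC] at this
        omega
      · split at hp
        · split at hp
          · rename_i heq1 hheq hcond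
            have e2 := congrArg Prod.snd (List.cons.inj heq1).1
            exact (e2.trans hcond.1).symm
          · simp at hp
        · simp at hp
    rw [ha]
    have hneg : ¬ ∃ c₂, VH C d ((b₂, c₂, fH v) :: (b₁, b₂, cw) :: v) :=
      fun hex => no_child_clash hC hw hex.choose hex.choose_spec
    have hpH : pH C d ((b₁, b₂, cw) :: v) (b₂, fH v) = some (v, (b₁, cw)) := by
      unfold pH
      exact (dif_neg hneg).trans (if_pos ⟨rfl, hw⟩)
    refine ⟨(b₁, cw), ?_⟩
    unfold pHhat
    rw [hpH]
    exact if_pos ⟨hwhat, hvhat⟩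
  · -- `w` is the parent of `v`
    obtain ⟨b₁, b₂, cv⟩ := t
    subst ht
    have hgv : gC ((b₁, b₂, cv) :: w) = (b₁, b₂) :: gC w := rfl
    rw [hgv] at hp
    unfold pd at hp
    split at hp
    · -- child branch of `pd`: gives `a = b₁`
      next hex0 =>
        simp only [Option.some.injEq, Prod.mk.injEq, List.cons.injEq] at hp
        obtain ⟨⟨he, -⟩, -⟩ := hp
        have ha : a = b₁ := he.1
        rw [ha]
        have hfv : fH ((b₁, b₂, cv) :: w) = cv := rfl
        rw [hfv]
        have hex : ∃ c₂, VH C d ((b₁, c₂, cv) :: w) := ⟨b₂, hv⟩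
        have hch : hex.choose = b₂ := VH_child_unique hC hex.choose_spec hv
        have hpH : pH C d w (b₁, cv) =
            some ((b₁, b₂, cv) :: w, (b₂, fH w)) := by
          unfold pH
          rw [← hch]
          exact dif_pos hex
        refine ⟨(b₂, fH w), ?_⟩
        unfold pHhat
        rw [hpH]
        exact if_pos ⟨hwhat, hvhat⟩
    · -- parent branch of `pd`: impossible by lengths
      exfalso
      split at hp
      · split at hp
        · rename_i heq1 hheq hcond
          have h1 := congrArg (fun p => p.1.length) (Option.some.inj hp)
          have h2 := congrArg List.length heq1
          simp only [List.length_cons, length_gC] at h1 h2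
          omega
        · simp at hp
      · simp at hp

lemma parity_eq_of_fH {C : Col} (hC : C ≠ Col.G) {d : ℕ} {v u : List Nd3}
    (hv : VH C d v) (hu : VH C d u) (hvhat : inHat C v) (huhat : inHat C u)
    (hcol : fH v = fH u) : v.length % 2 = u.length % 2 := by
  rw [fH_eq_parity hC hv hvhat, fH_eq_parity hC hu huhat] at hcol
  rcases Nat.mod_two_eq_zero_or_one v.length with h | h <;>
    rcases Nat.mod_two_eq_zero_or_one u.length with h' | h' <;>
    rw [h, h'] at hcol ⊢ <;> simp at hcol ⊢ <;>
    first
      | rfl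
      | exact absurd hcol hC
      | exact absurd hcol.symm hC

lemma fH_eq_of_parity {C : Col} (hC : C ≠ Col.G) {d : ℕ} {w w' : List Nd3}
    (hw : VH C d w) (hw' : VH C d w') (hwhat : inHat C w)
    (hw'hat : inHat C w') (hpar : w.length % 2 = w'.length % 2) :
    fH w = fH w' := by
  rw [fH_eq_parity hC hw hwhat, fH_eq_parity hC hw' hw'hat, hpar]

lemma parity_adj {a : Type} {w v : List a} (h : ∃ t : a, w = t :: v ∨ v = t :: w) :
    w.length % 2 = (v.length + 1) % 2 := by
  obtain ⟨t, h | h⟩ := h <;> have := congrArg List.length h <;>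
    simp only [List.length_cons] at this <;> omega

/-- If the images under `g_C` of two nodes of the subgraph `Ĥ_{C,d}` are
`r`-SV-bisimilar in `G_d` (with trivial input and the generalised port
numbering `p_d`) and the nodes have the same colour, then the two nodes are
`r`-SV-bisimilar in `(Ĥ_{C,d}, f_C, p_C)`. -/
theorem bisim_Gd_to_Hhat (C : Col) (hC : C ≠ Col.G) (d : ℕ) (hd : 2 ≤ d)
    (r : ℕ) (v u : List Nd3)
    (hv : VH C d v) (hu : VH C d u)
    (hvhat : inHat C v) (huhat : inHat C u)
    (hbisim : SVBisim (GdGraph d) (GdGraph d) (fun _ => ()) (fun _ => ())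
      (pd d) (pd d) r (gC v) (gC u))
    (hcol : fH v = fH u) :
    SVBisim (HhatGraph C d) (HhatGraph C d) fH fH
      (pHhat C d) (pHhat C d) r v u := by
  induction r generalizing v u with
  | zero =>
      simp only [SVBisim] at hbisim ⊢
      exact ⟨by rw [deg_hat hC hv hvhat, deg_hat hC hu huhat]; exact hbisim.1,
        hcol⟩
  | succ r IH =>
      simp only [SVBisim] at hbisim ⊢
      obtain ⟨⟨hdeg, -⟩, hfwd, hbwd⟩ := hbisim
      have hparvu : v.length % 2 = u.length % 2 :=
        parity_eq_of_fH hC hv hu hvhat huhat hcol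
      refine ⟨⟨by rw [deg_hat hC hv hvhat, deg_hat hC hu huhat]; exact hdeg,
        hcol⟩, ?_, ?_⟩
      · intro w hw
        obtain ⟨⟨hvVH, hwVH, hcons⟩, -, hwhat⟩ := hw
        have hGadj : (GdGraph d).Adj (gC v) (gC w) := by
          refine ⟨gC_Vd hC hv hvhat, gC_Vd hC hwVH hwhat, ?_⟩
          obtain ⟨t, ht | ht⟩ := hcons
          · exact ⟨(t.1, t.2.1), Or.inl (by rw [ht]; rfl)⟩
          · exact ⟨(t.1, t.2.1), Or.inr (by rw [ht]; rfl)⟩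
        obtain ⟨w₀, hadj₀, hbis₀, a, b, c, hp1, hp2⟩ := hfwd (gC w) hGadj
        obtain ⟨hadjH, hgcw'⟩ := lift_adj hC hu huhat hadj₀
        have hw'VH : VH C d (colorize C w₀) := hadjH.1.2.1
        have hcons' := hadjH.1.2.2
        have hw'hat : inHat C (colorize C w₀) := hadjH.2.2
        have hpar : w.length % 2 = (colorize C w₀).length % 2 := by
          have h1 := parity_adj hcons
          have h2 := parity_adj hcons'
          omega
        have hfww' : fH w = fH (colorize C w₀) :=
          fH_eq_of_parity hC hwVH hw'VH hwhat hw'hat hpar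
        obtain ⟨β, hβ⟩ := port_lift hC hv hwVH hvhat hwhat hcons hp1
        obtain ⟨γ, hγ⟩ := port_lift hC hu hw'VH huhat hw'hat hcons'
          (by rw [hgcw']; exact hp2)
        exact ⟨colorize C w₀, hadjH,
          IH w (colorize C w₀) hwVH hw'VH hwhat hw'hat
            (by rw [hgcw']; exact hbis₀) hfww',
          (a, fH v), β, γ, hβ, by rw [hcol]; exact hγ⟩
      · intro w' hw'
        obtain ⟨⟨huVH', hw'VH, hcons'⟩, -, hw'hat⟩ := hw'
        have hGadj : (GdGraph d).Adj (gC u) (gC w') := by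
          refine ⟨gC_Vd hC hu huhat, gC_Vd hC hw'VH hw'hat, ?_⟩
          obtain ⟨t, ht | ht⟩ := hcons'
          · exact ⟨(t.1, t.2.1), Or.inl (by rw [ht]; rfl)⟩
          · exact ⟨(t.1, t.2.1), Or.inr (by rw [ht]; rfl)⟩
        obtain ⟨w₀, hadj₀, hbis₀, a, b, c, hp1, hp2⟩ := hbwd (gC w') hGadj
        obtain ⟨hadjH, hgcw⟩ := lift_adj hC hv hvhat hadj₀
        have hwVH : VH C d (colorize C w₀) := hadjH.1.2.1
        have hcons := hadjH.1.2.2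
        have hwhat : inHat C (colorize C w₀) := hadjH.2.2
        have hpar : (colorize C w₀).length % 2 = w'.length % 2 := by
          have h1 := parity_adj hcons
          have h2 := parity_adj hcons'
          omega
        have hfww' : fH (colorize C w₀) = fH w' :=
          fH_eq_of_parity hC hwVH hw'VH hwhat hw'hat hpar
        obtain ⟨β, hβ⟩ := port_lift hC hv hwVH hvhat hwhat hcons
          (by rw [hgcw]; exact hp1)
        obtain ⟨γ, hγ⟩ := port_lift hC hu hw'VH huhat hw'hat hcons' hp2
        exact ⟨colorize C w₀, hadjH,
          IH (colorize C w₀) w' hwVH hw'VH hwhat hw'hat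
            (by rw [hgcw]; exact hbis₀) hfww',
          (a, fH v), β, γ, hβ, by rw [hcol]; exact hγ⟩

end Paper
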